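/- arXiv:2007.00580 — 3 statements merged into one kernel-verified Lean document; each statement's English description precedes it below -/
import Mathlib

section
/- Let σ ∈ {+1, −1} and let ψ : ℝ → ℂ be such that p ↦ √|p|·ψ(p) is Lebesgue integrable. Define the clock unitary (U_C(r)ψ)(p) := e^{−i r s p²/2} · ψ(p) for r ∈ ℝ. Then for all r, t ∈ ℝ: (C_σ(U_C(r)ψ))(t) = (C_σψ)(t − r). Consequently, for every Borel set X ⊆ ℝ, every r ∈ ℝ, and all ψ, φ ∈ L²(ℝ; ℂ) with √|p|·ψ and √|p|·φ integrable, Σ_{σ∈{+1,−1}} (1/2π) ∫_{r+X} conj((C_σψ)(t)) (C_σφ)(t) dt = Σ_{σ∈{+1,−1}} (1/2π) ∫_X conj((C_σ(U_C(−r)ψ))(t)) (C_σ(U_C(−r)φ))(t) dt; i.e., the effect operators E_T(X) of the clock POVM satisfy the covariance relation E_T(X + r) = U_C(r) E_T(X) U_C(r)† with respect to the group generated by the quadratic clock Hamiltonian. -/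
open MeasureTheory

/-- The clock transform `(C_σψ)(t) = ∫ √|p| · 1_{σp≤0}(p) · e^{i t s p²/2} · ψ(p) dp`,
i.e. the overlap `⟨t,σ|ψ⟩` with the covariant clock state of reading `t` in the
`σ`-frequency sector, for clock Hamiltonian `H_C = s p²/2`. -/
noncomputable def clockTransform (s σ : ℝ) (ψ : ℝ → ℂ) (t : ℝ) : ℂ :=
  ∫ p : ℝ, (Real.sqrt |p| : ℂ) * (if σ * p ≤ 0 then (1 : ℂ) else 0) *
    Complex.exp (Complex.I * t * s * p ^ 2 / 2) * ψ p

/-- The clock unitary `(U_C(r)ψ)(p) = e^{−i r s p²/2}·ψ(p)` generated by the quadratic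
clock Hamiltonian `H_C = s p²/2`, in momentum representation. -/
noncomputable def clockUnitary (s r : ℝ) (ψ : ℝ → ℂ) (p : ℝ) : ℂ :=
  Complex.exp (-(Complex.I * r * s * p ^ 2 / 2)) * ψ p

private lemma clock_cov_aux (s σ : ℝ) (ψ : ℝ → ℂ) (r t : ℝ) :
    clockTransform s σ (clockUnitary s r ψ) t = clockTransform s σ ψ (t - r) := by
  unfold clockTransform clockUnitary
  congr 1
  funext p
  rw [show Complex.exp (Complex.I * ((t - r : ℝ) : ℂ) * s * p ^ 2 / 2)
      = Complex.exp (Complex.I * t * s * p ^ 2 / 2) *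
        Complex.exp (-(Complex.I * r * s * p ^ 2 / 2)) by
    rw [← Complex.exp_add]; congr 1; push_cast; ring]
  ring

private lemma clock_transl_aux (X : Set ℝ) (r : ℝ) (f : ℝ → ℂ) :
    (∫ t in (fun u : ℝ => r + u) '' X, f t) = ∫ u in X, f (r + u) :=
  (measurePreserving_add_left volume r).setIntegral_image_emb
    (measurableEmbedding_addLeft r) f X

/-- Covariance of the clock POVM: the clock states transform covariantly,
`(C_σ(U_C(r)ψ))(t) = (C_σψ)(t − r)`, and consequently the effect operators satisfy
`E_T(X + r) = U_C(r) E_T(X) U_C(r)†`. -/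
theorem clock_povm_covariance (s : ℝ) (hs : s = 1 ∨ s = -1) :
    (∀ ψ : ℝ → ℂ, Integrable (fun p : ℝ => (Real.sqrt |p| : ℂ) * ψ p) →
      ∀ σ : ℝ, (σ = 1 ∨ σ = -1) → ∀ r t : ℝ,
        clockTransform s σ (clockUnitary s r ψ) t = clockTransform s σ ψ (t - r)) ∧
    (∀ X : Set ℝ, MeasurableSet X → ∀ r : ℝ, ∀ ψ φ : ℝ → ℂ,
      MemLp ψ 2 (volume : Measure ℝ) → MemLp φ 2 (volume : Measure ℝ) →
      Integrable (fun p : ℝ => (Real.sqrt |p| : ℂ) * ψ p) →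
      Integrable (fun p : ℝ => (Real.sqrt |p| : ℂ) * φ p) →
      (1 / (2 * Real.pi) : ℂ) *
          (∫ t in (fun u : ℝ => r + u) '' X,
            starRingEnd ℂ (clockTransform s 1 ψ t) * clockTransform s 1 φ t) +
        (1 / (2 * Real.pi) : ℂ) *
          (∫ t in (fun u : ℝ => r + u) '' X,
            starRingEnd ℂ (clockTransform s (-1) ψ t) * clockTransform s (-1) φ t)
      = (1 / (2 * Real.pi) : ℂ) *
          (∫ t in X, starRingEnd ℂ (clockTransform s 1 (clockUnitary s (-r) ψ) t) *
            clockTransform s 1 (clockUnitary s (-r) φ) t) +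
        (1 / (2 * Real.pi) : ℂ) *
          (∫ t in X, starRingEnd ℂ (clockTransform s (-1) (clockUnitary s (-r) ψ) t) *
            clockTransform s (-1) (clockUnitary s (-r) φ) t)) := by
  constructor
  · intro ψ _ σ _ r t
    exact clock_cov_aux s σ ψ r t
  · intro X _ r ψ φ _ _ _ _
    rw [clock_transl_aux X r, clock_transl_aux X r]
    congr 1
    · congr 1
      refine setIntegral_congr_fun (by measurability) ?_ |>.symm
      intro u _
      dsimp only
      rw [clock_cov_aux s 1 ψ (-r) u, clock_cov_aux s 1 φ (-r) u]
      simp [sub_neg_eq_add, add_comm]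
    · congr 1
      refine setIntegral_congr_fun (by measurability) ?_ |>.symm
      intro u _
      dsimp only
      rw [clock_cov_aux s (-1) ψ (-r) u, clock_cov_aux s (-1) φ (-r) u]
      simp [sub_neg_eq_add, add_comm]
end

section
/- Suppose ψ ∈ D(T̂), ψ(p)/√|p| → 0 as |p| → ∞, and both p ↦ √|p|·ψ(p) and p ↦ √|p|·(T̂ψ)(p) are Lebesgue integrable. Then for every t ∈ ℝ and every σ ∈ {+1, −1}: (C_σ(T̂ψ))(t) = t · (C_σψ)(t). (The covariant clock states are weak eigenstates of the covariant time operator: ⟨ψ| T̂ |t,σ⟩ = t · ⟨ψ|t,σ⟩ for all ψ in the domain of T̂, even though they are not eigenstates.) -/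
open MeasureTheory Filter

/-- The covariant time operator `(T̂ψ)(p) = i·s·(ψ′(p)/p − ψ(p)/(2p²))` in momentum
representation (symmetric ordering `(s/2)(t̂ p̂⁻¹ + p̂⁻¹ t̂)`). -/
noncomputable def timeOp (s : ℝ) (ψ : ℝ → ℂ) (p : ℝ) : ℂ :=
  Complex.I * (s : ℂ) * (deriv ψ p / (p : ℂ) - ψ p / (2 * (p : ℂ) ^ 2))

/-- The domain `D(T̂)` of the covariant time operator:  `ψ ∈ L²(ℝ)`, `ψ` differentiable
away from `0`, `ψ(p)/√|p| → 0` as `p → 0`, and `∫ |p|⁻¹·|d/dp(ψ(p)/√|p|)|² dp < ∞`. -/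
def MemDomTimeOp (ψ : ℝ → ℂ) : Prop :=
  MemLp ψ 2 (volume : Measure ℝ) ∧
  (∀ p : ℝ, p ≠ 0 → DifferentiableAt ℝ ψ p) ∧
  Tendsto (fun p : ℝ => ψ p / (Real.sqrt |p| : ℂ)) (nhdsWithin 0 {(0 : ℝ)}ᶜ) (nhds 0) ∧
  Integrable (fun p : ℝ =>
    |p|⁻¹ * ‖deriv (fun q : ℝ => ψ q / (Real.sqrt |q| : ℂ)) p‖ ^ 2)

section AuxClock
open Set

lemma sqrtAbs_hasDerivAt {p : ℝ} (hp : p ≠ 0) :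
    HasDerivAt (fun q : ℝ => Real.sqrt |q|)
      ((if 0 < p then 1 else -1) / (2 * Real.sqrt |p|)) p := by
  rcases hp.lt_or_gt with h | h
  · have h0 : (-p : ℝ) ≠ 0 := neg_ne_zero.mpr hp
    have h1 : HasDerivAt (fun q : ℝ => Real.sqrt (-q)) (1 / (2 * Real.sqrt (-p)) * -1) p := by
      simpa [Function.comp_def] using (Real.hasDerivAt_sqrt h0).comp p (hasDerivAt_neg p)
    have h2 : (fun q : ℝ => Real.sqrt |q|) =ᶠ[nhds p] (fun q : ℝ => Real.sqrt (-q)) := by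
      filter_upwards [Iio_mem_nhds h] with q hq
      rw [abs_of_neg hq]
    have h3 := h1.congr_of_eventuallyEq h2
    refine h3.congr_deriv (Eq.symm ?_)
    rw [if_neg (not_lt.mpr h.le), abs_of_neg h]; ring
  · have h2 : (fun q : ℝ => Real.sqrt |q|) =ᶠ[nhds p] (fun q : ℝ => Real.sqrt q) := by
      filter_upwards [Ioi_mem_nhds h] with q hq
      rw [abs_of_pos hq]
    have h3 := (Real.hasDerivAt_sqrt (ne_of_gt h)).congr_of_eventuallyEq h2
    refine h3.congr_deriv (Eq.symm ?_)
    rw [if_pos h, abs_of_pos h]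

lemma expPhase_hasDerivAt (t s p : ℝ) :
    HasDerivAt (fun q : ℝ => Complex.exp (Complex.I * t * s * q ^ 2 / 2))
      (Complex.I * t * s * p * Complex.exp (Complex.I * t * s * p ^ 2 / 2)) p := by
  have h1 : HasDerivAt (fun q : ℝ => (q : ℂ) ^ 2) (2 * (p : ℂ)) p := by
    simpa using (hasDerivAt_pow 2 ((p : ℝ) : ℂ)).comp_ofReal
  have hexp := (h1.const_mul (Complex.I * (t : ℂ) * (s : ℂ))).div_const 2
  have h3 := hexp.cexp
  convert h3 using 1
  push_cast
  ring

lemma phi_hasDerivAt (s : ℝ) (hs : s = 1 ∨ s = -1) (ψ : ℝ → ℂ) {p : ℝ} (hp : p ≠ 0)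
    (hd : DifferentiableAt ℝ ψ p) :
    HasDerivAt (fun q : ℝ => ψ q / (Real.sqrt |q| : ℂ))
      ((if 0 < p then 1 else -1 : ℂ) * (-Complex.I) * s
        * ((Real.sqrt |p| : ℂ) * timeOp s ψ p)) p := by
  have hr : Real.sqrt |p| ≠ 0 := by
    simp [Real.sqrt_eq_zero', abs_nonneg, not_le, abs_pos.mpr hp, hp]
  have hrC : ((Real.sqrt |p| : ℝ) : ℂ) ≠ 0 := Complex.ofReal_ne_zero.mpr hr
  have hdiv := hd.hasDerivAt.div ((sqrtAbs_hasDerivAt hp).ofReal_comp) hrC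
  refine hdiv.congr_deriv (Eq.symm ?_)
  unfold timeOp
  rcases hp.lt_or_gt with h | h
  · rw [if_neg (not_lt.mpr h.le), if_neg (not_lt.mpr h.le)]
    have hp2 : (p : ℂ) = -((Real.sqrt |p| : ℝ) : ℂ) ^ 2 := by
      rw [← Complex.ofReal_pow, Real.sq_sqrt (abs_nonneg p), abs_of_neg h]; push_cast; ring
    rcases hs with rfl | rfl <;>
    · rw [hp2]; push_cast; field_simp; ring_nf; simp [Complex.I_sq] <;> ring
  · rw [if_pos h, if_pos h]
    have hp2 : (p : ℂ) = ((Real.sqrt |p| : ℝ) : ℂ) ^ 2 := by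
      rw [← Complex.ofReal_pow, Real.sq_sqrt (abs_nonneg p), abs_of_pos h]
    rcases hs with rfl | rfl <;>
    · rw [hp2]; push_cast; field_simp; ring_nf; simp [Complex.I_sq] <;> ring

lemma key_Ioi (s : ℝ) (hs : s = 1 ∨ s = -1) (ψ : ℝ → ℂ)
    (hdiff : ∀ p : ℝ, p ≠ 0 → DifferentiableAt ℝ ψ p)
    (hzero : Tendsto (fun p : ℝ => ψ p / (Real.sqrt |p| : ℂ))
      (nhdsWithin 0 {(0 : ℝ)}ᶜ) (nhds 0))
    (hinf : Tendsto (fun p : ℝ => ψ p / (Real.sqrt |p| : ℂ)) (cocompact ℝ) (nhds 0))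
    (h1 : Integrable (fun p : ℝ => (Real.sqrt |p| : ℂ) * ψ p))
    (h2 : Integrable (fun p : ℝ => (Real.sqrt |p| : ℂ) * timeOp s ψ p)) (t : ℝ) :
    (∫ p in Set.Ioi (0:ℝ), (Real.sqrt |p| : ℂ)
        * Complex.exp (Complex.I * t * s * p ^ 2 / 2) * timeOp s ψ p)
      = t * ∫ p in Set.Ioi (0:ℝ), (Real.sqrt |p| : ℂ)
        * Complex.exp (Complex.I * t * s * p ^ 2 / 2) * ψ p := by
  set φ : ℝ → ℂ := fun p => ψ p / (Real.sqrt |p| : ℂ) with hφdef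
  set E : ℝ → ℂ := fun p => Complex.exp (Complex.I * t * s * p ^ 2 / 2) with hEdef
  set F : ℝ → ℂ := fun p => E p * φ p with hFdef
  set F' : ℝ → ℂ := fun p => Complex.I * t * s * p * E p * φ p
      + E p * ((-Complex.I) * s * ((Real.sqrt |p| : ℂ) * timeOp s ψ p)) with hF'def
  have hr0 : ∀ p : ℝ, p ≠ 0 → ((Real.sqrt |p| : ℝ) : ℂ) ≠ 0 := fun p hp =>
    Complex.ofReal_ne_zero.mpr (Real.sqrt_ne_zero'.mpr (abs_pos.mpr hp))
  have hFderiv : ∀ p ∈ Set.Ioi (0:ℝ), HasDerivAt F (F' p) p := by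
    intro p hp
    have h0 : p ≠ 0 := ne_of_gt hp
    have hplt : (0:ℝ) < p := hp
    have hφ' := phi_hasDerivAt s hs ψ h0 (hdiff p h0)
    rw [if_pos hplt] at hφ'
    have h := (expPhase_hasDerivAt t s p).mul hφ'
    refine h.congr_deriv (Eq.symm ?_)
    simp only [hF'def, hEdef]
    ring
  have hEcont : Continuous E := by
    apply Complex.continuous_exp.comp
    fun_prop
  have hEnorm : ∀ p : ℝ, ‖E p‖ = 1 := by
    intro p
    have h : Complex.I * (t:ℂ) * (s:ℂ) * (p:ℂ) ^ 2 / 2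
        = ((t * s * p ^ 2 / 2 : ℝ) : ℂ) * Complex.I := by push_cast; ring
    simp only [hEdef]
    rw [h, Complex.norm_exp_ofReal_mul_I]
  have hF0 : F 0 = 0 := by simp [hFdef, hφdef]
  have hφ0 : Tendsto φ (nhdsWithin 0 (Set.Ioi 0)) (nhds 0) :=
    hzero.mono_left (nhdsWithin_mono 0 (fun x hx => Set.mem_compl_singleton_iff.mpr (ne_of_gt hx)))
  have hcont : ContinuousWithinAt F (Set.Ici (0:ℝ)) 0 := by
    rw [← Set.Ioi_insert, continuousWithinAt_insert_self]
    show Tendsto F (nhdsWithin 0 (Set.Ioi 0)) (nhds (F 0))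
    rw [hF0]
    have := ((hEcont.continuousWithinAt (s := Set.Ioi (0:ℝ)) (x := 0)).tendsto).mul hφ0
    simpa using this
  have htop : Tendsto F atTop (nhds 0) := by
    have hφtop : Tendsto φ atTop (nhds 0) := by
      rw [cocompact_eq_atBot_atTop] at hinf
      exact hinf.mono_left le_sup_right
    refine squeeze_zero_norm (fun p => ?_) (by simpa only [norm_zero] using hφtop.norm)
    exact le_of_eq (by show ‖E p * φ p‖ = _; rw [norm_mul, hEnorm, one_mul])
  have hEb : ∃ C, ∀ p, ‖E p‖ ≤ C := ⟨1, fun p => (hEnorm p).le⟩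
  have hint1 : Integrable (fun p : ℝ => E p * ((Real.sqrt |p| : ℂ) * ψ p)) :=
    h1.bdd_mul hEcont.aestronglyMeasurable (ae_of_all _ (fun p => (hEnorm p).le))
  have hint2 : Integrable (fun p : ℝ => E p * ((Real.sqrt |p| : ℂ) * timeOp s ψ p)) :=
    h2.bdd_mul hEcont.aestronglyMeasurable (ae_of_all _ (fun p => (hEnorm p).le))
  have hF'int : IntegrableOn F' (Set.Ioi 0) volume := by
    have hg : IntegrableOn (fun p : ℝ =>
        (Complex.I * t * s) * (E p * ((Real.sqrt |p| : ℂ) * ψ p))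
          + ((-Complex.I) * s) * (E p * ((Real.sqrt |p| : ℂ) * timeOp s ψ p)))
        (Set.Ioi 0) volume :=
      ((hint1.const_mul _).add (hint2.const_mul _)).integrableOn
    refine hg.congr_fun (fun p hp => ?_) measurableSet_Ioi
    have hp2 : (p : ℂ) = ((Real.sqrt |p| : ℝ) : ℂ) ^ 2 := by
      rw [← Complex.ofReal_pow, Real.sq_sqrt (abs_nonneg p), abs_of_pos hp]
    simp only [hF'def, hφdef, hEdef]
    rw [hp2]
    field_simp [hr0 p (ne_of_gt hp)]
  have hFTC : ∫ p in Set.Ioi (0:ℝ), F' p = 0 - F 0 :=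
    integral_Ioi_of_hasDerivAt_of_tendsto hcont hFderiv hF'int htop
  rw [hF0, sub_zero] at hFTC
  have hsplit : ∀ p ∈ Set.Ioi (0:ℝ),
      (Real.sqrt |p| : ℂ) * E p * timeOp s ψ p
        = Complex.I * s * F' p + t * ((Real.sqrt |p| : ℂ) * E p * ψ p) := by
    intro p hp
    have hp2 : (p : ℂ) = ((Real.sqrt |p| : ℝ) : ℂ) ^ 2 := by
      rw [← Complex.ofReal_pow, Real.sq_sqrt (abs_nonneg p), abs_of_pos hp]
    have hs2 : (s : ℂ) * s = 1 := by rcases hs with rfl | rfl <;> norm_num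
    simp only [hF'def, hφdef]
    rw [hp2]
    field_simp [hr0 p (ne_of_gt hp)]
    linear_combination ((t:ℂ) * (Real.sqrt |p| : ℂ)^2 * E p * ψ p
        - (Real.sqrt |p| : ℂ)^2 * E p * timeOp s ψ p) * hs2
      - ((t:ℂ) * (Real.sqrt |p| : ℂ)^2 * E p * ψ p
        - (Real.sqrt |p| : ℂ)^2 * E p * timeOp s ψ p) * (s:ℂ)^2 * Complex.I_mul_I
        + (1 - (Real.sqrt |p| : ℂ)^2) * E p * (timeOp s ψ p - (t:ℂ) * ψ p) * (s:ℂ)^2 * Complex.I_mul_I - (1 - (Real.sqrt |p| : ℂ)^2) * E p * (timeOp s ψ p - (t:ℂ) * ψ p) * hs2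
  calc (∫ p in Set.Ioi (0:ℝ), (Real.sqrt |p| : ℂ) * E p * timeOp s ψ p)
      = ∫ p in Set.Ioi (0:ℝ),
          (Complex.I * s * F' p + t * ((Real.sqrt |p| : ℂ) * E p * ψ p)) :=
        setIntegral_congr_fun measurableSet_Ioi hsplit
    _ = (∫ p in Set.Ioi (0:ℝ), Complex.I * s * F' p)
        + ∫ p in Set.Ioi (0:ℝ), (t : ℂ) * ((Real.sqrt |p| : ℂ) * E p * ψ p) := by
        refine integral_add (hF'int.const_mul _) ?_
        refine (Integrable.const_mul ?_ _)
        exact hint1.integrableOn.congr_fun (fun p hp => by ring) measurableSet_Ioi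
    _ = t * ∫ p in Set.Ioi (0:ℝ), (Real.sqrt |p| : ℂ) * E p * ψ p := by
        rw [integral_const_mul, integral_const_mul, hFTC, mul_zero, zero_add]

lemma key_Iic (s : ℝ) (hs : s = 1 ∨ s = -1) (ψ : ℝ → ℂ)
    (hdiff : ∀ p : ℝ, p ≠ 0 → DifferentiableAt ℝ ψ p)
    (hzero : Tendsto (fun p : ℝ => ψ p / (Real.sqrt |p| : ℂ))
      (nhdsWithin 0 {(0 : ℝ)}ᶜ) (nhds 0))
    (hinf : Tendsto (fun p : ℝ => ψ p / (Real.sqrt |p| : ℂ)) (cocompact ℝ) (nhds 0))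
    (h1 : Integrable (fun p : ℝ => (Real.sqrt |p| : ℂ) * ψ p))
    (h2 : Integrable (fun p : ℝ => (Real.sqrt |p| : ℂ) * timeOp s ψ p)) (t : ℝ) :
    (∫ p in Set.Iic (0:ℝ), (Real.sqrt |p| : ℂ)
        * Complex.exp (Complex.I * t * s * p ^ 2 / 2) * timeOp s ψ p)
      = t * ∫ p in Set.Iic (0:ℝ), (Real.sqrt |p| : ℂ)
        * Complex.exp (Complex.I * t * s * p ^ 2 / 2) * ψ p := by
  set φ : ℝ → ℂ := fun p => ψ p / (Real.sqrt |p| : ℂ) with hφdef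
  set E : ℝ → ℂ := fun p => Complex.exp (Complex.I * t * s * p ^ 2 / 2) with hEdef
  set F : ℝ → ℂ := fun p => E p * φ p with hFdef
  set F' : ℝ → ℂ := fun p => Complex.I * t * s * p * E p * φ p
      + E p * (Complex.I * s * ((Real.sqrt |p| : ℂ) * timeOp s ψ p)) with hF'def
  have hr0 : ∀ p : ℝ, p ≠ 0 → ((Real.sqrt |p| : ℝ) : ℂ) ≠ 0 := fun p hp =>
    Complex.ofReal_ne_zero.mpr (Real.sqrt_ne_zero'.mpr (abs_pos.mpr hp))
  have hFderiv : ∀ p ∈ Set.Iio (0:ℝ), HasDerivAt F (F' p) p := by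
    intro p hp
    have hplt : p < 0 := hp
    have h0 : p ≠ 0 := ne_of_lt hplt
    have hφ' := phi_hasDerivAt s hs ψ h0 (hdiff p h0)
    rw [if_neg (not_lt.mpr hplt.le)] at hφ'
    have h := (expPhase_hasDerivAt t s p).mul hφ'
    refine h.congr_deriv (Eq.symm ?_)
    simp only [hF'def, hEdef]
    ring
  have hEcont : Continuous E := by
    apply Complex.continuous_exp.comp
    fun_prop
  have hEnorm : ∀ p : ℝ, ‖E p‖ = 1 := by
    intro p
    have h : Complex.I * (t:ℂ) * (s:ℂ) * (p:ℂ) ^ 2 / 2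
        = ((t * s * p ^ 2 / 2 : ℝ) : ℂ) * Complex.I := by push_cast; ring
    simp only [hEdef]
    rw [h, Complex.norm_exp_ofReal_mul_I]
  have hF0 : F 0 = 0 := by simp [hFdef, hφdef]
  have hφ0 : Tendsto φ (nhdsWithin 0 (Set.Iio 0)) (nhds 0) :=
    hzero.mono_left (nhdsWithin_mono 0 (fun x hx => Set.mem_compl_singleton_iff.mpr (ne_of_lt hx)))
  have hcont : ContinuousWithinAt F (Set.Iic (0:ℝ)) 0 := by
    rw [← Set.Iio_insert, continuousWithinAt_insert_self]
    show Tendsto F (nhdsWithin 0 (Set.Iio 0)) (nhds (F 0))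
    rw [hF0]
    have := ((hEcont.continuousWithinAt (s := Set.Iio (0:ℝ)) (x := 0)).tendsto).mul hφ0
    simpa using this
  have hbot : Tendsto F atBot (nhds 0) := by
    have hφbot : Tendsto φ atBot (nhds 0) := by
      rw [cocompact_eq_atBot_atTop] at hinf
      exact hinf.mono_left le_sup_left
    refine squeeze_zero_norm (fun p => ?_) (by simpa only [norm_zero] using hφbot.norm)
    exact le_of_eq (by show ‖E p * φ p‖ = _; rw [norm_mul, hEnorm, one_mul])
  have hEb : ∃ C, ∀ p, ‖E p‖ ≤ C := ⟨1, fun p => (hEnorm p).le⟩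
  have hint1 : Integrable (fun p : ℝ => E p * ((Real.sqrt |p| : ℂ) * ψ p)) :=
    h1.bdd_mul hEcont.aestronglyMeasurable (ae_of_all _ (fun p => (hEnorm p).le))
  have hint2 : Integrable (fun p : ℝ => E p * ((Real.sqrt |p| : ℂ) * timeOp s ψ p)) :=
    h2.bdd_mul hEcont.aestronglyMeasurable (ae_of_all _ (fun p => (hEnorm p).le))
  have hF'int : IntegrableOn F' (Set.Iic 0) volume := by
    have hg : IntegrableOn (fun p : ℝ =>
        (-(Complex.I * t * s)) * (E p * ((Real.sqrt |p| : ℂ) * ψ p))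
          + (Complex.I * s) * (E p * ((Real.sqrt |p| : ℂ) * timeOp s ψ p)))
        (Set.Iic 0) volume :=
      ((hint1.const_mul _).add (hint2.const_mul _)).integrableOn
    refine hg.congr_fun (fun p hp => ?_) measurableSet_Iic
    rcases lt_or_eq_of_le (Set.mem_Iic.mp hp) with hplt | hpeq
    · have hp2 : (p : ℂ) = -((Real.sqrt |p| : ℝ) : ℂ) ^ 2 := by
        rw [← Complex.ofReal_pow, Real.sq_sqrt (abs_nonneg p), abs_of_neg hplt]
        push_cast; ring
      simp only [hF'def, hφdef, hEdef]
      rw [hp2]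
      field_simp [hr0 p (ne_of_lt hplt)]
    · subst hpeq
      simp [hF'def, hφdef]
  have hFTC : ∫ p in Set.Iic (0:ℝ), F' p = F 0 - 0 :=
    integral_Iic_of_hasDerivAt_of_tendsto hcont hFderiv hF'int hbot
  rw [hF0, sub_zero] at hFTC
  have hsplit : ∀ p ∈ Set.Iic (0:ℝ),
      (Real.sqrt |p| : ℂ) * E p * timeOp s ψ p
        = (-(Complex.I * s)) * F' p + t * ((Real.sqrt |p| : ℂ) * E p * ψ p) := by
    intro p hp
    rcases lt_or_eq_of_le (Set.mem_Iic.mp hp) with hplt | hpeq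
    · have hp2 : (p : ℂ) = -((Real.sqrt |p| : ℝ) : ℂ) ^ 2 := by
        rw [← Complex.ofReal_pow, Real.sq_sqrt (abs_nonneg p), abs_of_neg hplt]
        push_cast; ring
      have hs2 : (s : ℂ) * s = 1 := by rcases hs with rfl | rfl <;> norm_num
      simp only [hF'def, hφdef]
      rw [hp2]
      field_simp [hr0 p (ne_of_lt hplt)]
      linear_combination ((t:ℂ) * (Real.sqrt |p| : ℂ)^2 * E p * ψ p
          - (Real.sqrt |p| : ℂ)^2 * E p * timeOp s ψ p) * hs2
        - ((t:ℂ) * (Real.sqrt |p| : ℂ)^2 * E p * ψ p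
          - (Real.sqrt |p| : ℂ)^2 * E p * timeOp s ψ p) * (s:ℂ)^2 * Complex.I_mul_I
        + (1 - (Real.sqrt |p| : ℂ)^2) * E p * (timeOp s ψ p - (t:ℂ) * ψ p) * (s:ℂ)^2 * Complex.I_mul_I - (1 - (Real.sqrt |p| : ℂ)^2) * E p * (timeOp s ψ p - (t:ℂ) * ψ p) * hs2
    · subst hpeq
      simp [hF'def, hφdef]
  calc (∫ p in Set.Iic (0:ℝ), (Real.sqrt |p| : ℂ) * E p * timeOp s ψ p)
      = ∫ p in Set.Iic (0:ℝ),
          ((-(Complex.I * s)) * F' p + t * ((Real.sqrt |p| : ℂ) * E p * ψ p)) :=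
        setIntegral_congr_fun measurableSet_Iic hsplit
    _ = (∫ p in Set.Iic (0:ℝ), (-(Complex.I * s)) * F' p)
        + ∫ p in Set.Iic (0:ℝ), (t : ℂ) * ((Real.sqrt |p| : ℂ) * E p * ψ p) := by
        refine integral_add (hF'int.const_mul _) ?_
        refine (Integrable.const_mul ?_ _)
        exact hint1.integrableOn.congr_fun (fun p hp => by ring) measurableSet_Iic
    _ = t * ∫ p in Set.Iic (0:ℝ), (Real.sqrt |p| : ℂ) * E p * ψ p := by
        rw [integral_const_mul, integral_const_mul, hFTC, mul_zero, zero_add]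

end AuxClock

/-- The covariant clock states are weak eigenstates of the covariant time operator:
`⟨ψ| T̂ |t,σ⟩ = t·⟨ψ|t,σ⟩` for all `ψ` in the domain of `T̂`. -/
theorem clock_states_weak_eigenstates
    (s : ℝ) (hs : s = 1 ∨ s = -1) (ψ : ℝ → ℂ)
    (hdom : MemDomTimeOp ψ)
    (hinf : Tendsto (fun p : ℝ => ψ p / (Real.sqrt |p| : ℂ)) (cocompact ℝ) (nhds 0))
    (h1 : Integrable (fun p : ℝ => (Real.sqrt |p| : ℂ) * ψ p))
    (h2 : Integrable (fun p : ℝ => (Real.sqrt |p| : ℂ) * timeOp s ψ p)) :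
    ∀ t σ : ℝ, (σ = 1 ∨ σ = -1) →
      clockTransform s σ (timeOp s ψ) t = (t : ℂ) * clockTransform s σ ψ t := by
  obtain ⟨-, hdiff, hzero, -⟩ := hdom
  intro t σ hσ
  rcases hσ with rfl | rfl
  · have hset : ∀ χ : ℝ → ℂ, clockTransform s 1 χ t
        = ∫ p in Set.Iic (0:ℝ), (Real.sqrt |p| : ℂ)
            * Complex.exp (Complex.I * t * s * p ^ 2 / 2) * χ p := by
      intro χ
      unfold clockTransform
      rw [← integral_indicator measurableSet_Iic]
      congr 1
      funext p
      by_cases hp : p ≤ 0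
      · rw [Set.indicator_of_mem (Set.mem_Iic.mpr hp)]
        have hc : (1:ℝ) * p ≤ 0 := by linarith
        rw [if_pos hc, mul_one]
      · rw [Set.indicator_of_notMem (by simpa using hp)]
        have hc : ¬ ((1:ℝ) * p ≤ 0) := by rw [one_mul]; exact hp
        rw [if_neg hc, mul_zero, zero_mul, zero_mul]
    rw [hset (timeOp s ψ), hset ψ]
    exact key_Iic s hs ψ hdiff hzero hinf h1 h2 t
  · have hset : ∀ χ : ℝ → ℂ, clockTransform s (-1) χ t
        = ∫ p in Set.Ici (0:ℝ), (Real.sqrt |p| : ℂ)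
            * Complex.exp (Complex.I * t * s * p ^ 2 / 2) * χ p := by
      intro χ
      unfold clockTransform
      rw [← integral_indicator measurableSet_Ici]
      congr 1
      funext p
      by_cases hp : 0 ≤ p
      · rw [Set.indicator_of_mem (Set.mem_Ici.mpr hp)]
        have hc : (-1:ℝ) * p ≤ 0 := by linarith
        rw [if_pos hc, mul_one]
      · rw [Set.indicator_of_notMem (by simpa using hp)]
        have hc : ¬ ((-1:ℝ) * p ≤ 0) := by
          push_neg at hp ⊢
          linarith
        rw [if_neg hc, mul_zero, zero_mul, zero_mul]
    rw [hset (timeOp s ψ), hset ψ]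
    rw [integral_Ici_eq_integral_Ioi, integral_Ici_eq_integral_Ioi]
    exact key_Ioi s hs ψ hdiff hzero hinf h1 h2 t
end

section
/- For ψ, φ ∈ L²(ℝ; ℂ) with p ↦ √|p|·ψ(p) and p ↦ √|p|·φ(p) integrable and any Borel set X ⊆ ℝ, define the effect pairing ⟨ψ, E_T(X) φ⟩ := Σ_{σ∈{+1,−1}} (1/2π) ∫_X conj((C_σψ)(t)) · (C_σφ)(t) dt. For σ′ ∈ {+1, −1} let Θ_{σ′} denote multiplication by the indicator function of {p ∈ ℝ : σ′p ≤ 0}. Then for all such ψ, φ, all Borel X, and all σ′: ⟨Θ_{σ′}ψ, E_T(X) φ⟩ = ⟨ψ, E_T(X) (Θ_{σ′}φ)⟩, and both sides equal (1/2π) ∫_X conj((C_{σ′}ψ)(t)) · (C_{σ′}φ)(t) dt. (The effect operators of the covariant clock POVM commute with the projectors onto the positive- and negative-frequency sectors, so the clock reading and the frequency sector can be simultaneously determined.) -/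
open MeasureTheory

/-- The effect pairing `⟨ψ, E_T(X) φ⟩ = Σ_σ (1/2π) ∫_X conj((C_σψ)(t))·(C_σφ)(t) dt`
of the covariant clock POVM. -/
noncomputable def effectPairing (s : ℝ) (X : Set ℝ) (ψ φ : ℝ → ℂ) : ℂ :=
  (1 / (2 * Real.pi) : ℂ) *
      (∫ t in X, starRingEnd ℂ (clockTransform s 1 ψ t) * clockTransform s 1 φ t) +
    (1 / (2 * Real.pi) : ℂ) *
      (∫ t in X, starRingEnd ℂ (clockTransform s (-1) ψ t) * clockTransform s (-1) φ t)

/-- Multiplication `Θ_σ′` by the indicator function of `{p : σ′p ≤ 0}`, i.e. the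
projector onto the `σ′`-frequency sector in momentum representation. -/
noncomputable def sectorProj (σ' : ℝ) (ψ : ℝ → ℂ) (p : ℝ) : ℂ :=
  if σ' * p ≤ 0 then ψ p else 0

section Aux

open MeasureTheory

lemma ct_same (s σ : ℝ) (ψ : ℝ → ℂ) (t : ℝ) :
    clockTransform s σ (sectorProj σ ψ) t = clockTransform s σ ψ t := by
  unfold clockTransform sectorProj
  congr 1
  funext p
  by_cases h : σ * p ≤ 0 <;> simp [h]

lemma ct_zero (s σ σ' : ℝ) (hσ : σ = 1 ∨ σ = -1) (hσ' : σ' = 1 ∨ σ' = -1)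
    (hne : σ ≠ σ') (ψ : ℝ → ℂ) (t : ℝ) :
    clockTransform s σ (sectorProj σ' ψ) t = 0 := by
  unfold clockTransform sectorProj
  have h : ∀ p : ℝ, (Real.sqrt |p| : ℂ) * (if σ * p ≤ 0 then (1 : ℂ) else 0) *
      Complex.exp (Complex.I * t * s * p ^ 2 / 2) *
      (if σ' * p ≤ 0 then ψ p else 0) = 0 := by
    intro p
    by_cases h1 : σ * p ≤ 0
    · by_cases h2 : σ' * p ≤ 0
      · have hp : p = 0 := by
          rcases hσ with rfl | rfl <;> rcases hσ' with rfl | rfl <;>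
            first
              | exact absurd rfl hne
              | nlinarith
        subst hp
        simp
      · simp [h2]
    · simp [h1]
  simp only [h, integral_zero]

end Aux

/-- The effect operators of the covariant clock POVM commute with the projectors onto
the positive- and negative-frequency sectors, so the clock reading and the frequency
sector can be simultaneously determined. -/
theorem effect_commutes_with_sector_projectors
    (s : ℝ) (hs : s = 1 ∨ s = -1)
    (ψ φ : ℝ → ℂ)
    (hψ2 : MemLp ψ 2 (volume : Measure ℝ))
    (hφ2 : MemLp φ 2 (volume : Measure ℝ))
    (hψ1 : Integrable (fun p : ℝ => (Real.sqrt |p| : ℂ) * ψ p))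
    (hφ1 : Integrable (fun p : ℝ => (Real.sqrt |p| : ℂ) * φ p))
    (X : Set ℝ) (hX : MeasurableSet X)
    (σ' : ℝ) (hσ' : σ' = 1 ∨ σ' = -1) :
    effectPairing s X (sectorProj σ' ψ) φ = effectPairing s X ψ (sectorProj σ' φ) ∧
    effectPairing s X (sectorProj σ' ψ) φ
      = (1 / (2 * Real.pi) : ℂ) *
          (∫ t in X, starRingEnd ℂ (clockTransform s σ' ψ t) * clockTransform s σ' φ t) := by
  rcases hσ' with rfl | rfl
  · have z1 := ct_zero s (-1) 1 (Or.inr rfl) (Or.inl rfl) (by norm_num) ψ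
    have z2 := ct_zero s (-1) 1 (Or.inr rfl) (Or.inl rfl) (by norm_num) φ
    have e1 : effectPairing s X (sectorProj 1 ψ) φ
        = (1 / (2 * Real.pi) : ℂ) *
          (∫ t in X, starRingEnd ℂ (clockTransform s 1 ψ t) * clockTransform s 1 φ t) := by
      unfold effectPairing
      simp only [ct_same, z1, map_zero, zero_mul, integral_zero, mul_zero, add_zero]
    have e2 : effectPairing s X ψ (sectorProj 1 φ)
        = (1 / (2 * Real.pi) : ℂ) *
          (∫ t in X, starRingEnd ℂ (clockTransform s 1 ψ t) * clockTransform s 1 φ t) := by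
      unfold effectPairing
      simp only [ct_same, z2, mul_zero, integral_zero, add_zero]
    exact ⟨e1.trans e2.symm, e1⟩
  · have z1 := ct_zero s 1 (-1) (Or.inl rfl) (Or.inr rfl) (by norm_num) ψ
    have z2 := ct_zero s 1 (-1) (Or.inl rfl) (Or.inr rfl) (by norm_num) φ
    have e1 : effectPairing s X (sectorProj (-1) ψ) φ
        = (1 / (2 * Real.pi) : ℂ) *
          (∫ t in X, starRingEnd ℂ (clockTransform s (-1) ψ t) * clockTransform s (-1) φ t) := by
      unfold effectPairing
      simp only [ct_same, z1, map_zero, zero_mul, integral_zero, mul_zero, zero_add]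
    have e2 : effectPairing s X ψ (sectorProj (-1) φ)
        = (1 / (2 * Real.pi) : ℂ) *
          (∫ t in X, starRingEnd ℂ (clockTransform s (-1) ψ t) * clockTransform s (-1) φ t) := by
      unfold effectPairing
      simp only [ct_same, z2, mul_zero, integral_zero, zero_add]
    exact ⟨e1.trans e2.symm, e1⟩
end
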